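/- (Theorem 3, linear part) Let n ≥ 2, let x ∈ ℝⁿ be non-constant, let J(x) be the Jacobian of the standardization map y at x, and let o = y(x)/‖y(x)‖. Then for every scalar c ∈ ℝ, J(x)·(c·o) = 0. In particular, for any fixed vectors y_1,…,y_D ∈ ℝⁿ and coefficients h ∈ ℝ^D, the back-propagated gradient J(x)·((Σ_{j=1}^D h_j ⟨o, y_j⟩)·o) of the linearly-correlated interaction term through the standardization phase vanishes. -/

import Mathlib

open scoped BigOperators

/-- Mini-batch mean of a feature dimension across `n` samples. -/
noncomputable def bmean {n : ℕ} (x : Fin n → ℝ) : ℝ := (∑ i, x i) / n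

/-- Mini-batch standard deviation of a feature dimension across `n` samples. -/
noncomputable def bstd {n : ℕ} (x : Fin n → ℝ) : ℝ :=
  Real.sqrt ((∑ i, (x i - bmean x) ^ 2) / n)

/-- `x` is non-constant: it differs from the constant vector of its mean. -/
def NonConstant {n : ℕ} (x : Fin n → ℝ) : Prop := x ≠ fun _ => bmean x

/-- The batch-normalization standardization phase (with ε = 0). -/
noncomputable def standardize {n : ℕ} (x : Fin n → ℝ) : Fin n → ℝ :=
  fun i => (x i - bmean x) / bstd x

section aux
variable {n : ℕ}

lemma bn_sum_pos (hn : 2 ≤ n) {x : Fin n → ℝ} (hx : NonConstant x) :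
    0 < ∑ i, (x i - bmean x) ^ 2 := by
  have : ∃ i, x i ≠ bmean x := by
    by_contra hc
    push_neg at hc
    exact hx (funext fun i => hc i)
  obtain ⟨i, hi⟩ := this
  have hne : x i - bmean x ≠ 0 := sub_ne_zero.2 hi
  apply Finset.sum_pos' (fun j _ => sq_nonneg _) ⟨i, Finset.mem_univ i, ?_⟩
  positivity

lemma bn_npos (hn : 2 ≤ n) : (0 : ℝ) < n := by
  have : 0 < n := lt_of_lt_of_le (by norm_num) hn
  exact_mod_cast this

lemma bstd_pos (hn : 2 ≤ n) {x : Fin n → ℝ} (hx : NonConstant x) : 0 < bstd x :=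
  Real.sqrt_pos.2 (div_pos (bn_sum_pos hn hx) (bn_npos hn))

lemma std_diff (hn : 2 ≤ n) {x : Fin n → ℝ} (hx : NonConstant x) :
    DifferentiableAt ℝ (standardize (n := n)) x := by
  have hmean : DifferentiableAt ℝ (fun y : Fin n → ℝ => bmean y) x := by
    unfold bmean; fun_prop
  have hsq : ∀ i : Fin n, DifferentiableAt ℝ (fun y : Fin n → ℝ => (y i - bmean y) ^ 2) x :=
    fun i => DifferentiableAt.pow ((differentiableAt_apply (𝕜 := ℝ) i x).sub hmean) 2
  have hS : DifferentiableAt ℝ (fun y : Fin n → ℝ => (∑ i, (y i - bmean y) ^ 2) / n) x := by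
    have h1 : DifferentiableAt ℝ (fun y : Fin n → ℝ => ∑ i, (y i - bmean y) ^ 2) x :=
      DifferentiableAt.fun_sum fun i _ => hsq i
    have hrw2 : (fun y : Fin n → ℝ => (∑ i, (y i - bmean y) ^ 2) / n)
        = fun y : Fin n → ℝ => (∑ i, (y i - bmean y) ^ 2) * (n : ℝ)⁻¹ :=
      funext fun y => div_eq_mul_inv _ _
    rw [hrw2]
    exact h1.mul_const ((n : ℝ)⁻¹)
  have hstd : DifferentiableAt ℝ (fun y : Fin n → ℝ => bstd y) x := by
    unfold bstd
    exact hS.sqrt (div_pos (bn_sum_pos hn hx) (bn_npos hn)).ne'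
  have key : DifferentiableAt ℝ (fun y : Fin n → ℝ => fun i => (y i - bmean y) * (bstd y)⁻¹) x :=
    differentiableAt_pi.2 fun i =>
      DifferentiableAt.mul ((differentiableAt_apply (𝕜 := ℝ) i x).sub hmean)
        (hstd.inv (bstd_pos hn hx).ne')
  have hrw : standardize (n := n) = fun y : Fin n → ℝ => fun i => (y i - bmean y) * (bstd y)⁻¹ := by
    funext y i
    exact div_eq_mul_inv _ _
  rw [hrw]
  exact key

lemma std_const_on_line (hn : 2 ≤ n) {x : Fin n → ℝ} (hx : NonConstant x)
    {t : ℝ} (ht : -1 < t) :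
    standardize (x + t • fun i => x i - bmean x) = standardize x := by
  set d : Fin n → ℝ := fun i => x i - bmean x with hd
  have hnpos := bn_npos (n := n) hn
  have hμ : bmean (x + t • d) = bmean x := by
    unfold bmean
    have : ∑ i, (x + t • d) i = ∑ i, x i + t * (∑ i, x i - n * bmean x) := by
      simp only [Pi.add_apply, Pi.smul_apply, smul_eq_mul, hd]
      rw [Finset.sum_add_distrib, ← Finset.mul_sum, Finset.sum_sub_distrib]
      simp [Finset.sum_const, mul_comm]
    rw [this]
    unfold bmean
    field_simp
    ring
  have h1t : (0:ℝ) < 1 + t := by linarith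
  have hdev : ∀ i, (x + t • d) i - bmean (x + t • d) = (1 + t) * d i := by
    intro i
    rw [hμ]
    simp only [Pi.add_apply, Pi.smul_apply, smul_eq_mul, hd]
    ring
  have hσ : bstd (x + t • d) = (1 + t) * bstd x := by
    unfold bstd
    have : ∑ i, ((x + t • d) i - bmean (x + t • d)) ^ 2
        = (1 + t) ^ 2 * ∑ i, (x i - bmean x) ^ 2 := by
      rw [Finset.mul_sum]
      refine Finset.sum_congr rfl fun i _ => ?_
      rw [hdev i]; ring
    rw [this, mul_div_assoc, Real.sqrt_mul (by positivity),
      Real.sqrt_sq (le_of_lt h1t)]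
  funext i
  unfold standardize
  rw [hdev i, hσ]
  exact mul_div_mul_left _ _ (ne_of_gt h1t)

lemma jac_kills_d (hn : 2 ≤ n) {x : Fin n → ℝ} (hx : NonConstant x) (k : ℝ) :
    fderiv ℝ (standardize (n := n)) x (k • fun i => x i - bmean x) = 0 := by
  set d : Fin n → ℝ := fun i => x i - bmean x with hd
  have hdiff := std_diff hn hx
  have hg : HasDerivAt (fun t : ℝ => x + t • d) d 0 := by
    simpa using ((hasDerivAt_id (0:ℝ)).smul_const d).const_add x
  have hfd : HasFDerivAt (standardize (n := n)) (fderiv ℝ (standardize (n := n)) x)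
      (x + (0:ℝ) • d) := by simpa using hdiff.hasFDerivAt
  have hcomp : HasDerivAt (fun t : ℝ => standardize (x + t • d))
      (fderiv ℝ (standardize (n := n)) x d) 0 := by
    have := hfd.comp_hasDerivAt 0 hg; exact this
  have hconst : HasDerivAt (fun t : ℝ => standardize (x + t • d))
      (0 : Fin n → ℝ) 0 := by
    have : (fun t : ℝ => standardize (x + t • d)) =ᶠ[nhds 0]
        fun _ => standardize x := by
      filter_upwards [Metric.ball_mem_nhds (0:ℝ) one_pos] with t ht
      have : -1 < t := by
        simp [Metric.mem_ball, Real.dist_eq, abs_lt] at ht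
        linarith [ht.1]
      exact std_const_on_line hn hx this
    exact (hasDerivAt_const (0:ℝ) (standardize x)).congr_of_eventuallyEq this
  have h0 : fderiv ℝ (standardize (n := n)) x d = 0 := hcomp.unique hconst
  rw [map_smul, h0, smul_zero]

end aux

/-- Theorem 3, linear part: with `o = y(x)/‖y(x)‖` (Euclidean norm),
every multiple of `o` is annihilated by the Jacobian of standardization at `x`;
in particular the back-propagated gradient of the linearly-correlated interaction
term `(Σⱼ hⱼ⟨o, yⱼ⟩)·o` through the standardization phase vanishes. -/


theorem bn_jacobian_kills_linear_component (n : ℕ) (hn : 2 ≤ n)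
    (x : Fin n → ℝ) (hx : NonConstant x) :
    let nrm : ℝ := Real.sqrt (∑ i, standardize x i ^ 2)
    let o : Fin n → ℝ := nrm⁻¹ • standardize x
    (∀ c : ℝ, fderiv ℝ (standardize (n := n)) x (c • o) = 0) ∧
    ∀ (D : ℕ) (ys : Fin D → Fin n → ℝ) (h : Fin D → ℝ),
      fderiv ℝ (standardize (n := n)) x
        ((∑ j, h j * ∑ i, o i * ys j i) • o) = 0 := by
  intro nrm o
  have key : ∀ k : ℝ, fderiv ℝ (standardize (n := n)) x (k • o) = 0 := by
    intro k
    have ho : k • o = (k * nrm⁻¹ * (bstd x)⁻¹) • fun i => x i - bmean x := by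
      funext i
      simp only [o, standardize, Pi.smul_apply, smul_eq_mul]
      rw [div_eq_mul_inv]
      ring
    rw [ho]
    exact jac_kills_d hn hx _
  exact ⟨key, fun D ys h => key _⟩
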